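/- arXiv:1311.4825 — 2 statements merged into one kernel-verified Lean document; each statement's English description precedes it below -/
import Mathlib

section
/- Let K_{T+1} be the (T+1)×(T+1) kernel matrix extending K_T by one point, both PSD, and σ > 0. Then (1/2)log det(I + σ⁻²K_{T+1}) − (1/2)log det(I + σ⁻²K_T) = (1/2)log(1 + σ⁻² σ²_{T+1}(x_{T+1})), where σ²_{T+1}(x_{T+1}) = k(x_{T+1},x_{T+1}) − k_T(x_{T+1})ᵀ(K_T+σ²I)⁻¹k_T(x_{T+1}). -/
open Matrix

lemma psd_smul {n : Type*} [Fintype n] {K : Matrix n n ℝ} (hK : K.PosSemidef) {c : ℝ}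
    (hc : 0 ≤ c) : (c • K).PosSemidef := by
  constructor
  · unfold Matrix.IsHermitian
    rw [conjTranspose_smul, hK.1]
    simp
  · intro x
    exact (hK.smul hc).2 x

theorem information_chain_rule (T : ℕ) (Kbig : Matrix (Fin (T + 1)) (Fin (T + 1)) ℝ)
    (hK : Kbig.PosSemidef) (σ : ℝ) (hσ : 0 < σ) :
    let Ksmall : Matrix (Fin T) (Fin T) ℝ :=
      Kbig.submatrix Fin.castSucc Fin.castSucc
    let kvec : Fin T → ℝ := fun i => Kbig (Fin.last T) i.castSucc
    let κ : ℝ := Kbig (Fin.last T) (Fin.last T)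
    (1 / 2) * Real.log (Matrix.det (1 + (σ ^ 2)⁻¹ • Kbig)) -
        (1 / 2) * Real.log (Matrix.det (1 + (σ ^ 2)⁻¹ • Ksmall)) =
      (1 / 2) * Real.log (1 + (σ ^ 2)⁻¹ *
        (κ - kvec ⬝ᵥ ((Ksmall + σ ^ 2 • (1 : Matrix (Fin T) (Fin T) ℝ))⁻¹ *ᵥ kvec))) := by
  intro Ksmall kvec κ
  have hσ2 : (0:ℝ) < σ ^ 2 := by positivity
  have hσ2i : (0:ℝ) < (σ ^ 2)⁻¹ := by positivity
  set M : Matrix (Fin (T+1)) (Fin (T+1)) ℝ := 1 + (σ ^ 2)⁻¹ • Kbig with hM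
  set A : Matrix (Fin T) (Fin T) ℝ := 1 + (σ ^ 2)⁻¹ • Ksmall with hA
  have hKs : Ksmall.PosSemidef := hK.submatrix _
  have hMpd : M.PosDef :=
    Matrix.PosDef.add_posSemidef Matrix.PosDef.one (psd_smul hK hσ2i.le)
  have hApd : A.PosDef :=
    Matrix.PosDef.add_posSemidef Matrix.PosDef.one (psd_smul hKs hσ2i.le)
  have hdetM : 0 < M.det := hMpd.det_pos
  have hdetA : 0 < A.det := hApd.det_pos
  set B : Matrix (Fin T) (Fin 1) ℝ := Matrix.of fun i _ => (σ ^ 2)⁻¹ * kvec i with hB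
  set C : Matrix (Fin 1) (Fin T) ℝ := Matrix.of fun _ j => (σ ^ 2)⁻¹ * kvec j with hC
  set D : Matrix (Fin 1) (Fin 1) ℝ := Matrix.of fun _ _ => 1 + (σ ^ 2)⁻¹ * κ with hD
  have hsym : ∀ i : Fin T, Kbig i.castSucc (Fin.last T) = kvec i := by
    intro i
    have := congrFun (congrFun hK.1 (Fin.last T)) i.castSucc
    simpa [Matrix.conjTranspose_apply] using this
  have e1 : ∀ i : Fin T, finSumFinEquiv (Sum.inl i) = (i.castSucc : Fin (T+1)) := fun i => rfl
  have e2 : ∀ k : Fin 1, finSumFinEquiv (Sum.inr k) = Fin.last T := by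
    intro k; apply Fin.ext; simp [Fin.last]
  have hblock : M.submatrix finSumFinEquiv finSumFinEquiv = Matrix.fromBlocks A B C D := by
    ext i j
    cases i with
    | inl i => cases j with
      | inl j =>
        simp [hM, hA, Matrix.submatrix_apply, e1, Matrix.one_apply, Fin.castSucc_inj, Ksmall]
      | inr j =>
        simp [hM, hB, Matrix.submatrix_apply, e1, e2, Matrix.one_apply,
          (Fin.castSucc_lt_last i).ne, hsym i]
    | inr i => cases j with
      | inl j =>
        simp [hM, hC, Matrix.submatrix_apply, e1, e2, Matrix.one_apply,
          (Fin.castSucc_lt_last j).ne', kvec]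
      | inr j =>
        simp [hM, hD, Matrix.submatrix_apply, e2, Matrix.one_apply, κ]
  haveI : Invertible A := A.invertibleOfIsUnitDet hdetA.ne'.isUnit
  have hdet : M.det = A.det * ((D - C * ⅟A * B) 0 0) := by
    rw [← Matrix.det_submatrix_equiv_self finSumFinEquiv M, hblock,
      Matrix.det_fromBlocks₁₁, Matrix.det_fin_one]
  have key : (C * (A⁻¹ * B)) 0 0 = (σ^2)⁻¹ * ((σ^2)⁻¹ * (kvec ⬝ᵥ (A⁻¹ *ᵥ kvec))) := by
    simp only [Matrix.mul_apply, hB, hC, Matrix.of_apply, dotProduct, mulVec, Finset.mul_sum]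
    refine Finset.sum_congr rfl fun k _ => ?_
    refine Finset.sum_congr rfl fun j _ => ?_
    ring
  have hNA : Ksmall + σ ^ 2 • (1 : Matrix (Fin T) (Fin T) ℝ) = σ ^ 2 • A := by
    rw [hA, smul_add, smul_smul, mul_inv_cancel₀ hσ2.ne', one_smul, add_comm]
  haveI : Invertible (σ ^ 2 : ℝ) := invertibleOfNonzero hσ2.ne'
  have hN : (Ksmall + σ ^ 2 • (1 : Matrix (Fin T) (Fin T) ℝ))⁻¹ = (σ ^ 2)⁻¹ • A⁻¹ := by
    rw [hNA, A.inv_smul (σ ^ 2) hdetA.ne'.isUnit, invOf_eq_inv]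
  have hs : (D - C * ⅟A * B) 0 0 = 1 + (σ ^ 2)⁻¹ *
      (κ - kvec ⬝ᵥ ((Ksmall + σ ^ 2 • (1 : Matrix (Fin T) (Fin T) ℝ))⁻¹ *ᵥ kvec)) := by
    rw [invOf_eq_nonsing_inv, Matrix.mul_assoc, Matrix.sub_apply, key, hN,
      Matrix.smul_mulVec, dotProduct_smul, hD]
    simp only [Matrix.of_apply, smul_eq_mul]
    ring
  have hval : M.det / A.det = 1 + (σ ^ 2)⁻¹ *
      (κ - kvec ⬝ᵥ ((Ksmall + σ ^ 2 • (1 : Matrix (Fin T) (Fin T) ℝ))⁻¹ *ᵥ kvec)) := by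
    rw [hdet, hs]
    field_simp
  rw [← mul_sub, ← Real.log_div hdetM.ne' hdetA.ne', hval]
end

section
/- Let σ > 0 and let (s_t)_{t=1}^T be reals in [0,1]. Then ∑_{t=1}^T s_t ≤ C₁ · (1/2)∑_{t=1}^T log(1 + σ⁻² s_t), where C₁ = 2/log(1+σ⁻²). -/
lemma key_pt {a p : ℝ} (ha : 0 < a) (hp0 : 0 ≤ p) (hp1 : p ≤ 1) :
    p * Real.log (1 + a) ≤ Real.log (1 + a * p) := by
  have h1 : (0:ℝ) < 1 + a := by linarith
  have h2 : (1 + a) ^ p ≤ 1 + p * a :=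
    rpow_one_add_le_one_add_mul_self (by linarith) hp0 hp1
  have h3 : (0:ℝ) < 1 + a * p := by nlinarith
  calc p * Real.log (1 + a) = Real.log ((1 + a) ^ p) := (Real.log_rpow h1 p).symm
    _ ≤ Real.log (1 + a * p) := Real.log_le_log (Real.rpow_pos_of_pos h1 p) (by linarith [h2])

theorem summed_info_bound (T : ℕ) (σ : ℝ) (hσ : 0 < σ) (s : ℕ → ℝ)
    (hs : ∀ t, 1 ≤ t → t ≤ T → s t ∈ Set.Icc (0:ℝ) 1) :
    ∑ t ∈ Finset.Icc 1 T, s t ≤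
      2 / Real.log (1 + (σ ^ 2)⁻¹) *
        ((1 / 2) * ∑ t ∈ Finset.Icc 1 T, Real.log (1 + (σ ^ 2)⁻¹ * s t)) := by
  set a := (σ ^ 2)⁻¹ with ha_def
  have ha : 0 < a := inv_pos.mpr (by positivity)
  have hL : 0 < Real.log (1 + a) := Real.log_pos (by linarith)
  have hsum : (Real.log (1 + a)) * ∑ t ∈ Finset.Icc 1 T, s t ≤
      ∑ t ∈ Finset.Icc 1 T, Real.log (1 + a * s t) := by
    rw [Finset.mul_sum]
    refine Finset.sum_le_sum fun t ht => ?_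
    simp only [Finset.mem_Icc] at ht
    obtain ⟨h0, h1⟩ := hs t ht.1 ht.2
    have := key_pt ha h0 h1
    linarith
  rw [div_mul_eq_mul_div, div_mul_eq_mul_div, le_div_iff₀ hL]
  nlinarith [hsum]
end
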